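/- Let c > 0. Let λ : [0,∞) → (0,∞) and F : [0,∞) → ℝ be continuously differentiable, with F nondecreasing (so F'(r) ≥ 0). Assume: (i) ∫₀^r λ(t) dt ≤ c·r² for all r ≥ 1; and (ii) F(r) ≤ 2π − λ'(r) + (F'(r))^{1/2}·(λ(r))^{1/2} for all r ≥ 0. Then F(r) ≤ 2π + c for all r ≥ 0. -/

import Mathlib

open Set MeasureTheory intervalIntegral

set_option maxHeartbeats 1000000

/-- Cheng–Yau type boundedness: let `c > 0`, `λ : [0,∞) → (0,∞)` and `F : [0,∞) → ℝ`
be `C¹` with `F' ≥ 0` (F nondecreasing).  If `∫₀^r λ ≤ c·r²` for all `r ≥ 1` and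
`F(r) ≤ 2π − λ'(r) + √(F'(r))·√(λ(r))` for all `r ≥ 0`, then `F(r) ≤ 2π + c` for all
`r ≥ 0`. -/
theorem energy_bounded
    (c : ℝ) (hc : 0 < c) (lam F lam' F' : ℝ → ℝ)
    (hlam_pos : ∀ r ∈ Set.Ici (0 : ℝ), 0 < lam r)
    (hlam_deriv : ∀ r ∈ Set.Ici (0 : ℝ), HasDerivAt lam (lam' r) r)
    (hlam'_cont : ContinuousOn lam' (Set.Ici 0))
    (hF_deriv : ∀ r ∈ Set.Ici (0 : ℝ), HasDerivAt F (F' r) r)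
    (hF'_cont : ContinuousOn F' (Set.Ici 0))
    (hF'_nonneg : ∀ r ∈ Set.Ici (0 : ℝ), 0 ≤ F' r)
    (harea : ∀ r : ℝ, 1 ≤ r → (∫ t in (0 : ℝ)..r, lam t) ≤ c * r ^ 2)
    (hGB : ∀ r ∈ Set.Ici (0 : ℝ),
      F r ≤ 2 * Real.pi - lam' r + Real.sqrt (F' r) * Real.sqrt (lam r)) :
    ∀ r ∈ Set.Ici (0 : ℝ), F r ≤ 2 * Real.pi + c := by
  intro r hr
  have hr0 : (0:ℝ) ≤ r := hr
  by_contra hcon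
  push_neg at hcon
  have ha0 : 0 < F r - 2 * Real.pi := by linarith
  have hca : c < F r - 2 * Real.pi := by linarith
  -- F is monotone on [0, ∞)
  have hFmono : MonotoneOn F (Set.Ici (0 : ℝ)) := by
    apply monotoneOn_of_deriv_nonneg (convex_Ici 0)
    · exact fun x hx => (hF_deriv x hx).continuousAt.continuousWithinAt
    · intro x hx
      rw [interior_Ici] at hx
      exact ((hF_deriv x (Set.mem_Ici.mpr (le_of_lt hx))).differentiableAt).differentiableWithinAt
    · intro x hx
      rw [interior_Ici] at hx
      rw [(hF_deriv x (Set.mem_Ici.mpr (le_of_lt hx))).deriv]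
      exact hF'_nonneg x (Set.mem_Ici.mpr (le_of_lt hx))
  have hgpos : ∀ t, r ≤ t → 0 < F t - 2 * Real.pi := by
    intro t ht
    have := hFmono hr (Set.mem_Ici.mpr (hr.trans ht)) ht
    linarith
  -- the modified (everywhere continuous) lambda
  have hlamC : ContinuousOn lam (Set.Ici 0) :=
    fun x hx => (hlam_deriv x hx).continuousAt.continuousWithinAt
  have hglcont : Continuous fun u : ℝ => lam (max u 0) :=
    hlamC.comp_continuous (continuous_id.max continuous_const)
      (fun x => le_max_right x 0)
  have hLamderiv : ∀ t : ℝ,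
      HasDerivAt (fun u => ∫ x in (0:ℝ)..u, lam (max x 0)) (lam (max t 0)) t := by
    intro t
    exact intervalIntegral.integral_hasDerivAt_right (hglcont.intervalIntegrable 0 t)
      hglcont.aestronglyMeasurable.stronglyMeasurableAtFilter hglcont.continuousAt
  have hLam_nonneg : ∀ t : ℝ, 0 ≤ t → 0 ≤ ∫ u in (0:ℝ)..t, lam (max u 0) := by
    intro t ht
    apply intervalIntegral.integral_nonneg ht
    intro u _
    exact (hlam_pos _ (le_max_right u 0)).le
  have hLam_le : ∀ R : ℝ, 1 ≤ R → (∫ u in (0:ℝ)..R, lam (max u 0)) ≤ c * R ^ 2 := by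
    intro R hR
    have hRe : (∫ u in (0:ℝ)..R, lam (max u 0)) = ∫ u in (0:ℝ)..R, lam u := by
      apply intervalIntegral.integral_congr
      intro u hu
      rw [Set.uIcc_of_le (by linarith : (0:ℝ) ≤ R)] at hu
      show lam (max u 0) = lam u
      rw [max_eq_left hu.1]
    rw [hRe]
    exact harea R hR
  -- choose the small parameter s and the large radius R
  set A : ℝ := F r - 2 * Real.pi with hA_def
  have hδ : 0 < 1 / c - 1 / A := by
    have := one_div_lt_one_div_of_lt hc hca
    linarith
  have hK : 0 < r + lam r / A := by
    have := div_pos (hlam_pos r hr) ha0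
    linarith
  set s : ℝ := min ((1 / c - 1 / A) / (4 * (r + lam r / A))) (1 / (c * (r + 1))) with hs_def
  have hs : 0 < s := lt_min (div_pos hδ (by linarith))
    (one_div_pos.mpr (mul_pos hc (by linarith)))
  set R : ℝ := 1 / (s * c) with hR_def
  have hsc : 0 < s * c := mul_pos hs hc
  have hRr1 : r + 1 ≤ R := by
    have h1 : s ≤ 1 / (c * (r + 1)) := min_le_right _ _
    have h2 : s * (c * (r + 1)) ≤ 1 := by
      rw [← le_div_iff₀ (mul_pos hc (by linarith : (0:ℝ) < r + 1))]
      exact h1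
    rw [hR_def, le_div_iff₀ hsc]
    nlinarith
  have hR1 : 1 ≤ R := by linarith
  have hRr : r ≤ R := by linarith
  -- the comparison function Ψ is antitone on [r, ∞)
  have hΨderiv : ∀ t ∈ Set.Ici r,
      HasDerivAt (fun u => u + lam u / (F u - 2 * Real.pi)
          + 1 / (2 * s) * (F u - 2 * Real.pi)⁻¹
          - s / 2 * ∫ x in (0:ℝ)..u, lam (max x 0))
        (1 + (lam' t * (F t - 2 * Real.pi) - lam t * F' t) / (F t - 2 * Real.pi) ^ 2
          + 1 / (2 * s) * (-(F' t) / (F t - 2 * Real.pi) ^ 2)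
          - s / 2 * lam (max t 0)) t := by
    intro t ht
    have ht0 : (0:ℝ) ≤ t := hr.trans ht
    have hgne : F t - 2 * Real.pi ≠ 0 := ne_of_gt (hgpos t ht)
    have hgd : HasDerivAt (fun u => F u - 2 * Real.pi) (F' t) t :=
      (hF_deriv t ht0).sub_const _
    have h2 : HasDerivAt (fun u => lam u / (F u - 2 * Real.pi))
        ((lam' t * (F t - 2 * Real.pi) - lam t * F' t) / (F t - 2 * Real.pi) ^ 2) t :=
      (hlam_deriv t ht0).div hgd hgne
    have h3 : HasDerivAt (fun u => (F u - 2 * Real.pi)⁻¹)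
        (-(F' t) / (F t - 2 * Real.pi) ^ 2) t := hgd.inv hgne
    exact (((hasDerivAt_id t).add h2).add (h3.const_mul (1 / (2 * s)))).sub
      ((hLamderiv t).const_mul (s / 2))
  have hanti : AntitoneOn (fun u => u + lam u / (F u - 2 * Real.pi)
      + 1 / (2 * s) * (F u - 2 * Real.pi)⁻¹
      - s / 2 * ∫ x in (0:ℝ)..u, lam (max x 0)) (Set.Ici r) := by
    apply antitoneOn_of_deriv_nonpos (convex_Ici r)
    · exact fun t ht => (hΨderiv t ht).continuousAt.continuousWithinAt
    · intro t ht
      rw [interior_Ici] at ht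
      exact (hΨderiv t (Set.mem_Ici.mpr (le_of_lt ht))).differentiableAt.differentiableWithinAt
    · intro t ht
      rw [interior_Ici] at ht
      rw [(hΨderiv t (Set.mem_Ici.mpr (le_of_lt ht))).deriv]
      have ht0 : (0:ℝ) ≤ t := hr.trans (le_of_lt ht)
      have hgx : 0 < F t - 2 * Real.pi := hgpos t (le_of_lt ht)
      have hGBx := hGB t ht0
      have hLx := hlam_pos t ht0
      have hxF := hF'_nonneg t ht0
      rw [max_eq_left ht0]
      set G : ℝ := F t - 2 * Real.pi with hG_def
      set P : ℝ := Real.sqrt (F' t) with hP_def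
      set Q : ℝ := Real.sqrt (lam t) with hQ_def
      have hP2 : P ^ 2 = F' t := Real.sq_sqrt hxF
      have hQ2 : Q ^ 2 = lam t := Real.sq_sqrt hLx.le
      have hGB' : G + lam' t ≤ P * Q := by
        rw [hG_def]; linarith
      have h1 : 2 * s * G * (G + lam' t) ≤ 2 * s * G * (P * Q) :=
        mul_le_mul_of_nonneg_left hGB' (by positivity)
      have hQ2' : s ^ 2 * lam t * G ^ 2 = (s * Q * G) ^ 2 := by
        rw [← hQ2]; ring
      have h2 : 2 * s * G * (P * Q) ≤ F' t + s ^ 2 * lam t * G ^ 2 := by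
        rw [hQ2', ← hP2]
        nlinarith [sq_nonneg (P - s * Q * G)]
      have hLF : 0 ≤ 2 * s * lam t * F' t := by positivity
      have hkey : 2 * s * G ^ 2 + 2 * s * (lam' t * G - lam t * F' t)
          - F' t - s ^ 2 * lam t * G ^ 2 ≤ 0 := by nlinarith [h1, h2, hLF]
      have heq : 1 + (lam' t * G - lam t * F' t) / G ^ 2
          + 1 / (2 * s) * (-(F' t) / G ^ 2) - s / 2 * lam t
          = (2 * s * G ^ 2 + 2 * s * (lam' t * G - lam t * F' t)
            - F' t - s ^ 2 * lam t * G ^ 2) / (2 * s * G ^ 2) := by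
        field_simp
        ring
      rw [heq]
      exact div_nonpos_of_nonpos_of_nonneg hkey (by positivity)
  -- evaluate the antitone function at r and R
  have hΨRr : R + lam R / (F R - 2 * Real.pi) + 1 / (2 * s) * (F R - 2 * Real.pi)⁻¹
      - s / 2 * (∫ x in (0:ℝ)..R, lam (max x 0))
      ≤ r + lam r / (F r - 2 * Real.pi) + 1 / (2 * s) * (F r - 2 * Real.pi)⁻¹
      - s / 2 * ∫ x in (0:ℝ)..r, lam (max x 0) :=
    hanti (Set.self_mem_Ici) (Set.mem_Ici.mpr hRr) hRr
  have hA1 : 0 ≤ lam R / (F R - 2 * Real.pi) :=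
    div_nonneg (hlam_pos R (Set.mem_Ici.mpr (by linarith))).le (hgpos R hRr).le
  have hB1 : 0 ≤ 1 / (2 * s) * (F R - 2 * Real.pi)⁻¹ :=
    mul_nonneg (by positivity) (inv_nonneg.mpr (hgpos R hRr).le)
  have hC1 := hLam_le R hR1
  have hD1 := hLam_nonneg r hr
  have hE1 : s / 2 * (∫ u in (0:ℝ)..R, lam (max u 0)) ≤ s / 2 * (c * R ^ 2) :=
    mul_le_mul_of_nonneg_left hC1 (by positivity)
  have hF1 : 0 ≤ s / 2 * ∫ u in (0:ℝ)..r, lam (max u 0) :=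
    mul_nonneg (by positivity) hD1
  have hfin : R - s / 2 * (c * R ^ 2) ≤ r + lam r / A + 1 / (2 * s) * A⁻¹ := by
    rw [hA_def]
    linarith
  have hRe : R - s / 2 * (c * R ^ 2) = 1 / (2 * s * c) := by
    rw [hR_def]
    field_simp
    ring
  have hAne : A ≠ 0 := ne_of_gt ha0
  -- contradiction with the choice of s
  have h2sK : 2 * s * (r + lam r / A) < 1 / c - 1 / A := by
    have h1' : s * (4 * (r + lam r / A)) ≤ 1 / c - 1 / A := by
      rw [← le_div_iff₀ (by linarith : (0:ℝ) < 4 * (r + lam r / A))]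
      exact min_le_left _ _
    nlinarith
  have hcontra : r + lam r / A + 1 / (2 * s) * A⁻¹ < 1 / (2 * s * c) := by
    have hmul : (2 * s) * (r + lam r / A + 1 / (2 * s) * A⁻¹)
        < (2 * s) * (1 / (2 * s * c)) := by
      have e1 : (2 * s) * (r + lam r / A + 1 / (2 * s) * A⁻¹)
          = 2 * s * (r + lam r / A) + 1 / A := by
        field_simp
      have e2 : (2 * s) * (1 / (2 * s * c)) = 1 / c := by
        field_simp
      rw [e1, e2]
      linarith
    exact lt_of_mul_lt_mul_left hmul (by positivity)
  linarith
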